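/- Let the family of ability CDFs be the Gaussian location–scale family F(n) = Φ((n-μ)/σ) with μ ∈ ℝ and σ > 0. Fix s₀ ≠ s₁. If for some e ≥ 0, μ', σ' > 0 we have Φ((u - e·s₀ - μ')/σ') = Φ((u - ε·s₀ - μ)/σ) for all u < k and Φ((u - e·s₁ - μ')/σ') = Φ((u - ε·s₁ - μ)/σ) for all u ≥ k, then e = ε, μ' = μ, and σ' = σ. -/

import Mathlib

open MeasureTheory

/-- The standard normal CDF. -/
noncomputable def Phi (x : ℝ) : ℝ :=
  ∫ t in Set.Iic x, Real.exp (-(t ^ 2) / 2) / Real.sqrt (2 * Real.pi)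

lemma phi_eq : (fun t : ℝ => Real.exp (-(t ^ 2) / 2) / Real.sqrt (2 * Real.pi))
    = ProbabilityTheory.gaussianPDFReal 0 1 := by
  ext t
  simp [ProbabilityTheory.gaussianPDFReal, div_eq_inv_mul, mul_comm]

lemma Phi_strictMono : StrictMono Phi := by
  intro x y hxy
  have hint : Integrable (ProbabilityTheory.gaussianPDFReal 0 1) :=
    ProbabilityTheory.integrable_gaussianPDFReal 0 1
  have h : Phi y - Phi x = ∫ t in x..y, ProbabilityTheory.gaussianPDFReal 0 1 t := by
    rw [Phi, Phi, phi_eq]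
    exact intervalIntegral.integral_Iic_sub_Iic hint.integrableOn hint.integrableOn
  have hpos : 0 < ∫ t in x..y, ProbabilityTheory.gaussianPDFReal 0 1 t := by
    apply intervalIntegral.intervalIntegral_pos_of_pos_on hint.intervalIntegrable
    · intro t _
      exact ProbabilityTheory.gaussianPDFReal_pos 0 1 t one_ne_zero
    · exact hxy
  linarith

/-- The Gaussian location–scale family satisfies the
tail-identification condition: matching the two tails pins down `(e, μ', σ')`. -/
theorem gaussian_tail_identification
    (k s0 s1 ε μ σ μ' σ' e : ℝ) (hs : s0 ≠ s1) (hε : 0 ≤ ε)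
    (hσ : 0 < σ) (hσ' : 0 < σ') (he : 0 ≤ e)
    (h1 : ∀ u < k, Phi ((u - e * s0 - μ') / σ') = Phi ((u - ε * s0 - μ) / σ))
    (h2 : ∀ u, k ≤ u → Phi ((u - e * s1 - μ') / σ') = Phi ((u - ε * s1 - μ) / σ)) :
    e = ε ∧ μ' = μ ∧ σ' = σ := by
  have hinj := Phi_strictMono.injective
  have e1 : (k - 1 - e * s0 - μ') / σ' = (k - 1 - ε * s0 - μ) / σ :=
    hinj (h1 (k - 1) (by linarith))
  have e2 : (k - 2 - e * s0 - μ') / σ' = (k - 2 - ε * s0 - μ) / σ :=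
    hinj (h1 (k - 2) (by linarith))
  have e3 : (k - e * s1 - μ') / σ' = (k - ε * s1 - μ) / σ :=
    hinj (h2 k le_rfl)
  have hσn : σ ≠ 0 := ne_of_gt hσ
  have hσ'n : σ' ≠ 0 := ne_of_gt hσ'
  field_simp at e1 e2 e3
  have hσσ : σ' = σ := by nlinarith [e1, e2]
  subst hσσ
  have hA : e * s0 + μ' = ε * s0 + μ := by
    have := mul_right_cancel₀ hσn (e1.trans (mul_comm _ _)); linarith
  have hB : e * s1 + μ' = ε * s1 + μ := by
    have := mul_left_cancel₀ hσn e3; linarith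
  have heε : e = ε := by
    have h := sub_ne_zero.mpr hs
    have : (e - ε) * (s0 - s1) = 0 := by nlinarith
    rcases mul_eq_zero.mp this with h' | h'
    · linarith [sub_eq_zero.mp h']
    · exact absurd h' h
  subst heε
  exact ⟨rfl, by linarith, rfl⟩
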